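/- Let r̃ > 0, ω ∈ ℕ, φ ∈ (0,1), and let r_1,…,r_N ∈ [0, r̃]. Let R̃ be the N × ω matrix with (i,c) entry r_i^{2c}, assume R̃ᵀR̃ invertible, set ζ = ⟨1_N, P_{R̃} 1_N⟩ and assume ζ ≤ φ N, and let ρ = (I_N − P_{R̃})1_N/(N − ζ). Suppose e ∈ ℝ^N has entries e_i = η₀ + Σ_{c=1}^{ω} b_c r_i^{2c} + γ_i r_i^β for some η₀, b_1,…,b_ω ∈ ℝ, β > 0, and |γ_i| ≤ Γ for all i. Then |η₀ − ⟨ρ, e⟩| ≤ (1−φ)^{−1/2} Γ r̃^β. -/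

import Mathlib

open Matrix Finset

lemma projP_spec {m n : Type*} [Fintype m] [Fintype n] [DecidableEq n]
    (R : Matrix m n ℝ) (hinv : IsUnit (Rᵀ * R).det) :
    ∃ P : Matrix m m ℝ, P = R * (Rᵀ * R)⁻¹ * Rᵀ ∧ Pᵀ = P ∧ P * P = P ∧ P * R = R := by
  have hMA : (Rᵀ * R)⁻¹ * (Rᵀ * R) = 1 := Matrix.nonsing_inv_mul _ hinv
  have hAT : (Rᵀ * R)ᵀ = Rᵀ * R := by rw [Matrix.transpose_mul, Matrix.transpose_transpose]
  have hMT : ((Rᵀ * R)⁻¹)ᵀ = (Rᵀ * R)⁻¹ := by rw [Matrix.transpose_nonsing_inv, hAT]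
  refine ⟨R * (Rᵀ * R)⁻¹ * Rᵀ, rfl, ?_, ?_, ?_⟩
  · rw [Matrix.transpose_mul, Matrix.transpose_mul, Matrix.transpose_transpose, hMT,
      Matrix.mul_assoc]
  · simp only [Matrix.mul_assoc]
    rw [← Matrix.mul_assoc Rᵀ R, ← Matrix.mul_assoc ((Rᵀ * R)⁻¹), hMA, Matrix.one_mul]
  · rw [Matrix.mul_assoc, Matrix.mul_assoc, hMA, Matrix.mul_one]

/-- Let `r̃ > 0`, `ω ∈ ℕ`, `φ ∈ (0,1)`, and `r_1,…,r_N ∈ [0, r̃]`.  Let `R̃`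
be the `N × ω` matrix with `(i,c)` entry `r_i^{2c}`, assume `R̃ᵀR̃` invertible, set
`ζ = ⟨1_N, P_{R̃} 1_N⟩` and assume `ζ ≤ φN`, and let `ρ = (I_N − P_{R̃})1_N/(N − ζ)`.
Suppose `e_i = η₀ + Σ_{c=1}^{ω} b_c r_i^{2c} + γ_i r_i^β` with `|γ_i| ≤ Γ`.  Then
`|η₀ − ⟨ρ, e⟩| ≤ (1−φ)^{−1/2} Γ r̃^β`. -/
theorem stmt12 (N ω : ℕ) (hN : 0 < N) (rt : ℝ) (hrt : 0 < rt)
    (φ : ℝ) (hφ : φ ∈ Set.Ioo (0 : ℝ) 1)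
    (r : Fin N → ℝ) (hr : ∀ i, r i ∈ Set.Icc (0 : ℝ) rt)
    (Rt : Matrix (Fin N) (Fin ω) ℝ)
    (hRt : Rt = Matrix.of fun (i : Fin N) (c : Fin ω) => r i ^ (2 * ((c : ℕ) + 1)))
    (hinv : IsUnit (Rtᵀ * Rt).det)
    (ζ : ℝ)
    (hζ : ζ = (fun _ => (1 : ℝ)) ⬝ᵥ ((Rt * (Rtᵀ * Rt)⁻¹ * Rtᵀ) *ᵥ fun _ => (1 : ℝ)))
    (hζφ : ζ ≤ φ * N)
    (ρ : Fin N → ℝ)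
    (hρ : ρ = fun i =>
      ((((1 : Matrix (Fin N) (Fin N) ℝ) - Rt * (Rtᵀ * Rt)⁻¹ * Rtᵀ) *ᵥ fun _ => (1 : ℝ)) i) /
        ((N : ℝ) - ζ))
    (β : ℝ) (hβ : 0 < β) (η₀ Γ : ℝ) (b : Fin ω → ℝ) (γ : Fin N → ℝ)
    (hΓ : ∀ i, |γ i| ≤ Γ)
    (e : Fin N → ℝ)
    (he : ∀ i, e i = η₀ + (∑ c, b c * r i ^ (2 * ((c : ℕ) + 1))) + γ i * r i ^ β) :
    |η₀ - ρ ⬝ᵥ e| ≤ (1 - φ) ^ (-(1 / 2) : ℝ) * Γ * rt ^ β := by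
  obtain ⟨hφ0, hφ1⟩ := hφ
  obtain ⟨P, hPdef, hPT, hPP, hPR⟩ := projP_spec Rt hinv
  rw [← hPdef] at hζ hρ
  set Q : Matrix (Fin N) (Fin N) ℝ := 1 - P with hQ
  set o : Fin N → ℝ := fun _ => (1 : ℝ) with ho
  set S : ℝ := (N : ℝ) - ζ with hS
  set u : Fin N → ℝ := Q *ᵥ o with hu
  have hNpos : (0 : ℝ) < N := by exact_mod_cast hN
  have hSineq : (1 - φ) * N ≤ S := by rw [hS]; nlinarith
  have hSpos : 0 < S := lt_of_lt_of_le (by nlinarith) hSineq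
  have hS0 : S ≠ 0 := ne_of_gt hSpos
  have hQT : Qᵀ = Q := by rw [hQ, Matrix.transpose_sub, Matrix.transpose_one, hPT]
  have hQQ : Q * Q = Q := by
    rw [hQ, sub_mul, one_mul, mul_sub, mul_one, hPP]; abel
  have hQR : Q * Rt = 0 := by rw [hQ, Matrix.sub_mul, Matrix.one_mul, hPR, sub_self]
  have hoo : o ⬝ᵥ o = (N : ℝ) := by simp [dotProduct, ho]
  have huo : u ⬝ᵥ o = S := by
    rw [hu, hQ, Matrix.sub_mulVec, sub_dotProduct, Matrix.one_mulVec, hoo,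
      dotProduct_comm, ← hζ, hS]
  have huv : u = o ᵥ* Q := by
    rw [← hQT, Matrix.vecMul_transpose]
  have huu : u ⬝ᵥ u = S := by
    have h0 : u ⬝ᵥ u = (o ᵥ* Q) ⬝ᵥ (Q *ᵥ o) := by rw [← huv, ← hu]
    rw [h0, Matrix.dotProduct_mulVec, Matrix.vecMul_vecMul, hQQ, ← huv, huo]
  set g : Fin N → ℝ := fun i => γ i * r i ^ β with hg
  have hub : u ⬝ᵥ (Rt *ᵥ b) = 0 := by
    rw [huv, Matrix.dotProduct_mulVec, Matrix.vecMul_vecMul, hQR, Matrix.vecMul_zero,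
      zero_dotProduct]
  have hdecomp : ∀ i, e i = η₀ * o i + (Rt *ᵥ b) i + g i := by
    intro i
    have hm : (Rt *ᵥ b) i = ∑ c, b c * r i ^ (2 * ((c : ℕ) + 1)) := by
      rw [hRt]
      simp [Matrix.mulVec, dotProduct, mul_comm]
    rw [he i, hm]
    simp only [ho, hg]
    ring
  have hue : u ⬝ᵥ e = η₀ * S + u ⬝ᵥ g := by
    calc u ⬝ᵥ e = ∑ i, (η₀ * (u i * o i) + u i * (Rt *ᵥ b) i + u i * g i) := by
          simp only [dotProduct]
          refine Finset.sum_congr rfl fun i _ => ?_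
          rw [hdecomp i]; ring
      _ = η₀ * (u ⬝ᵥ o) + u ⬝ᵥ (Rt *ᵥ b) + u ⬝ᵥ g := by
          simp only [dotProduct, Finset.sum_add_distrib, Finset.mul_sum]
      _ = η₀ * S + u ⬝ᵥ g := by rw [huo, hub]; ring
  have hρe : ρ ⬝ᵥ e = (u ⬝ᵥ e) / S := by
    rw [hρ]
    simp only [dotProduct]
    rw [Finset.sum_div]
    exact Finset.sum_congr rfl fun i _ => div_mul_eq_mul_div _ _ _
  have hkey : η₀ - ρ ⬝ᵥ e = -(u ⬝ᵥ g) / S := by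
    rw [hρe, hue]
    field_simp
    ring
  have hΓ0 : 0 ≤ Γ := (abs_nonneg _).trans (hΓ ⟨0, hN⟩)
  have hT0 : 0 ≤ Γ * rt ^ β := mul_nonneg hΓ0 (Real.rpow_nonneg hrt.le β)
  have hgb : ∀ i, g i ^ 2 ≤ (Γ * rt ^ β) ^ 2 := by
    intro i
    have h1 : |g i| ≤ Γ * rt ^ β := by
      rw [hg]
      simp only []
      rw [abs_mul]
      have h2 : |r i ^ β| ≤ rt ^ β := by
        rw [abs_of_nonneg (Real.rpow_nonneg (hr i).1 β)]
        exact Real.rpow_le_rpow (hr i).1 (hr i).2 hβ.le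
      exact mul_le_mul (hΓ i) h2 (abs_nonneg _) hΓ0
    calc g i ^ 2 = |g i| ^ 2 := (sq_abs _).symm
      _ ≤ (Γ * rt ^ β) ^ 2 := by nlinarith [abs_nonneg (g i)]
  have hgg : ∑ i, g i ^ 2 ≤ (N : ℝ) * (Γ * rt ^ β) ^ 2 := by
    calc ∑ i, g i ^ 2 ≤ ∑ _i : Fin N, (Γ * rt ^ β) ^ 2 :=
          Finset.sum_le_sum fun i _ => hgb i
      _ = (N : ℝ) * (Γ * rt ^ β) ^ 2 := by simp [mul_comm]
  have hCSsq : (u ⬝ᵥ g) ^ 2 ≤ S * ((N : ℝ) * (Γ * rt ^ β) ^ 2) := by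
    have h1 := Finset.sum_mul_sq_le_sq_mul_sq Finset.univ u g
    have h2 : ∑ i, u i ^ 2 = S := by
      rw [← huu]
      simp only [dotProduct]
      exact Finset.sum_congr rfl fun i _ => pow_two (u i)
    calc (u ⬝ᵥ g) ^ 2 = (∑ i, u i * g i) ^ 2 := rfl
      _ ≤ (∑ i, u i ^ 2) * (∑ i, g i ^ 2) := h1
      _ ≤ S * ((N : ℝ) * (Γ * rt ^ β) ^ 2) := by
          rw [h2]; exact mul_le_mul_of_nonneg_left hgg hSpos.le
  have hCS : |u ⬝ᵥ g| ≤ Real.sqrt S * (Real.sqrt N * (Γ * rt ^ β)) := by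
    calc |u ⬝ᵥ g| = Real.sqrt ((u ⬝ᵥ g) ^ 2) := (Real.sqrt_sq_eq_abs _).symm
      _ ≤ Real.sqrt (S * ((N : ℝ) * (Γ * rt ^ β) ^ 2)) := Real.sqrt_le_sqrt hCSsq
      _ = Real.sqrt S * (Real.sqrt N * (Γ * rt ^ β)) := by
          rw [Real.sqrt_mul hSpos.le, Real.sqrt_mul (Nat.cast_nonneg N), Real.sqrt_sq hT0]
  have hrw : |η₀ - ρ ⬝ᵥ e| = |u ⬝ᵥ g| / S := by
    rw [hkey, abs_div, abs_neg, abs_of_pos hSpos]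
  have h1φ : (0 : ℝ) < 1 - φ := by linarith
  have hsq1φ : 0 < Real.sqrt (1 - φ) := Real.sqrt_pos.mpr h1φ
  have hsplit : Real.sqrt (1 - φ) * Real.sqrt N ≤ Real.sqrt S := by
    rw [← Real.sqrt_mul h1φ.le]
    exact Real.sqrt_le_sqrt hSineq
  have hrpow : (1 - φ) ^ (-(1 / 2) : ℝ) = (Real.sqrt (1 - φ))⁻¹ := by
    rw [Real.rpow_neg h1φ.le, ← Real.sqrt_eq_rpow]
  rw [hrw, hrpow, div_le_iff₀ hSpos]
  have hss : Real.sqrt S * Real.sqrt S = S := Real.mul_self_sqrt hSpos.le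
  have h2 : Real.sqrt (1 - φ) * (Real.sqrt S * (Real.sqrt N * (Γ * rt ^ β))) ≤
      S * (Γ * rt ^ β) := by
    have key := mul_le_mul_of_nonneg_right hsplit
      (mul_nonneg hT0 (Real.sqrt_nonneg S))
    calc Real.sqrt (1 - φ) * (Real.sqrt S * (Real.sqrt N * (Γ * rt ^ β)))
        = Real.sqrt (1 - φ) * Real.sqrt N * (Γ * rt ^ β * Real.sqrt S) := by ring
      _ ≤ Real.sqrt S * (Γ * rt ^ β * Real.sqrt S) := key
      _ = Real.sqrt S * Real.sqrt S * (Γ * rt ^ β) := by ring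
      _ = S * (Γ * rt ^ β) := by rw [hss]
  calc |u ⬝ᵥ g| ≤ Real.sqrt S * (Real.sqrt N * (Γ * rt ^ β)) := hCS
    _ = (Real.sqrt (1 - φ))⁻¹ *
        (Real.sqrt (1 - φ) * (Real.sqrt S * (Real.sqrt N * (Γ * rt ^ β)))) := by
        rw [inv_mul_cancel_left₀ hsq1φ.ne']
    _ ≤ (Real.sqrt (1 - φ))⁻¹ * (S * (Γ * rt ^ β)) :=
        mul_le_mul_of_nonneg_left h2 (inv_nonneg.mpr (Real.sqrt_nonneg _))
    _ = (Real.sqrt (1 - φ))⁻¹ * Γ * rt ^ β * S := by ring
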